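/- Under assumptions (1), (2), (3), the function θ̂ is strictly increasing on (ξ̄, ξ*): for all x1, x2 ∈ (ξ̄, ξ*) with x1 < x2, one has θ̂(x1) < θ̂(x2). -/

import Mathlib

/-- under assumptions (1), (2), (3), the function `θ̂` (the unique
zero of `G(·; ξ)` in `(T/3, T/2)`) is strictly increasing on `(ξ̄, ξ*)`. -/
theorem stmt_15 (T ξ1 ξ2 : ℝ) (hT : 0 < T) (hξ12 : ξ1 < ξ2)
    (H : ℝ → ℝ → ℝ)
    (hC2 : ∀ ξ ∈ Set.Icc ξ1 ξ2, ContDiff ℝ 2 (fun θ : ℝ => H θ ξ))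
    (hper : ∀ ξ ∈ Set.Icc ξ1 ξ2, ∀ θ : ℝ, H (θ + T) ξ = H θ ξ)
    (hC1 : ∀ θ : ℝ, ContDiffOn ℝ 1 (fun ξ : ℝ => H θ ξ) (Set.Icc ξ1 ξ2))
    (G : ℝ → ℝ → ℝ)
    (hG : ∀ θ ξ : ℝ, G θ ξ = H θ ξ - H (-θ) ξ)
    (ξb : ℝ) (hξb : ξb ∈ Set.Ico ξ1 ξ2)
    (h1 : G (T / 3) ξb = 0)
    (h2 : ∀ ξ ∈ Set.Ioc ξb ξ2, ∀ θ ∈ Set.Ico (T / 3) (T / 2),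
      deriv (fun x : ℝ => G θ x) ξ < 0)
    (ξs : ℝ) (hξs : ξs ∈ Set.Ioc ξb ξ2)
    (h3 : ∀ θ ∈ Set.Ioo (T / 3) (T / 2), ∀ ξ ∈ Set.Ioo ξb ξs,
      deriv (deriv (fun t : ℝ => G t ξ)) θ < 0)
    (θhat : ℝ → ℝ)
    (hθhat : ∀ ξ ∈ Set.Ioo ξb ξs,
      θhat ξ ∈ Set.Ioo (T / 3) (T / 2) ∧ G (θhat ξ) ξ = 0) :
    ∀ x1 ∈ Set.Ioo ξb ξs, ∀ x2 ∈ Set.Ioo ξb ξs, x1 < x2 → θhat x1 < θhat x2 := by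
  intro x1 hx1 x2 hx2 hlt
  obtain ⟨ht1mem, ht1zero⟩ := hθhat x1 hx1
  obtain ⟨ht2mem, ht2zero⟩ := hθhat x2 hx2
  set t1 := θhat x1 with ht1def
  set t2 := θhat x2 with ht2def
  have hx2Icc : x2 ∈ Set.Icc ξ1 ξ2 :=
    ⟨le_of_lt (lt_of_le_of_lt hξb.1 hx2.1), le_of_lt (lt_of_lt_of_le hx2.2 hξs.2)⟩
  -- G (T/2) x2 = 0
  have hGhalf : G (T / 2) x2 = 0 := by
    have := hper x2 hx2Icc (-(T / 2))
    have h' : -(T / 2) + T = T / 2 := by ring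
    rw [h'] at this
    rw [hG]
    linarith [this]
  -- Step: G t1 x2 < 0
  have hkey : G t1 x2 < 0 := by
    have hanti : StrictAntiOn (fun ξ : ℝ => G t1 ξ) (Set.Icc x1 x2) := by
      apply strictAntiOn_of_deriv_neg (convex_Icc x1 x2)
      · intro ξ hξ
        have hξIoc : ξ ∈ Set.Ioc ξb ξ2 :=
          ⟨lt_of_lt_of_le hx1.1 hξ.1, le_trans hξ.2 (le_of_lt hx2.2) |>.trans hξs.2⟩
        have hd := h2 ξ hξIoc t1 ⟨le_of_lt ht1mem.1, ht1mem.2⟩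
        exact ((differentiableAt_of_deriv_ne_zero (ne_of_lt hd)).continuousAt).continuousWithinAt
      · intro ξ hξ
        rw [interior_Icc] at hξ
        have hξIoc : ξ ∈ Set.Ioc ξb ξ2 :=
          ⟨lt_of_lt_of_le hx1.1 (le_of_lt hξ.1), le_trans (le_of_lt hξ.2) ((le_of_lt hx2.2).trans hξs.2)⟩
        exact h2 ξ hξIoc t1 ⟨le_of_lt ht1mem.1, ht1mem.2⟩
    have := hanti (Set.left_mem_Icc.mpr (le_of_lt hlt)) (Set.right_mem_Icc.mpr (le_of_lt hlt)) hlt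
    simpa [ht1zero] using this
  -- Strict concavity of θ ↦ G θ x2 on [t2, T/2]
  by_contra hcon
  push_neg at hcon
  rcases eq_or_lt_of_le hcon with heq | hgt
  · rw [heq] at ht2zero
    exact absurd ht2zero (ne_of_lt hkey)
  · -- t2 < t1 < T/2, G t2 x2 = 0, G (T/2) x2 = 0, strict concavity ⇒ G t1 x2 > 0
    have hcont : ContinuousOn (fun t : ℝ => G t x2) (Set.Icc t2 (T / 2)) := by
      have hH := (hC2 x2 hx2Icc).continuous
      have : Continuous (fun t : ℝ => H t x2 - H (-t) x2) :=
        hH.sub (hH.comp continuous_neg)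
      have heqf : (fun t : ℝ => G t x2) = fun t : ℝ => H t x2 - H (-t) x2 := by
        funext t; exact hG t x2
      rw [heqf]; exact this.continuousOn
    have hconc : StrictConcaveOn ℝ (Set.Icc t2 (T / 2)) (fun t : ℝ => G t x2) := by
      apply strictConcaveOn_of_deriv2_neg (convex_Icc _ _) hcont
      intro θ hθ
      rw [interior_Icc] at hθ
      exact h3 θ ⟨lt_trans ht2mem.1 hθ.1, hθ.2⟩ x2 hx2
    have ht1lt : t1 < T / 2 := ht1mem.2
    set a : ℝ := (T / 2 - t1) / (T / 2 - t2) with ha_def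
    set b : ℝ := (t1 - t2) / (T / 2 - t2) with hb_def
    have hden : 0 < T / 2 - t2 := by linarith [ht2mem.2]
    have ha : 0 < a := div_pos (by linarith) hden
    have hb : 0 < b := div_pos (by linarith) hden
    have hab : a + b = 1 := by
      rw [ha_def, hb_def, ← add_div, div_eq_one_iff_eq (ne_of_gt hden)]
      ring
    have hcomb : a • t2 + b • (T / 2) = t1 := by
      rw [smul_eq_mul, smul_eq_mul, ha_def, hb_def, div_mul_eq_mul_div,
        div_mul_eq_mul_div, ← add_div, div_eq_iff (ne_of_gt hden)]
      ring
    have hmemt2 : t2 ∈ Set.Icc t2 (T / 2) := Set.left_mem_Icc.mpr (by linarith [ht2mem.2])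
    have hmemT : T / 2 ∈ Set.Icc t2 (T / 2) := Set.right_mem_Icc.mpr (by linarith [ht2mem.2])
    have hne : t2 ≠ T / 2 := ne_of_lt (by linarith [ht2mem.2])
    have hlt0 := hconc.2 hmemt2 hmemT hne ha hb hab
    rw [hcomb] at hlt0
    have hpos : (0:ℝ) < G t1 x2 := by simpa [ht2zero, hGhalf] using hlt0
    linarith
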